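/- arXiv:1911.12800 — 6 statements merged into one kernel-verified Lean document; each statement's English description precedes it below -/
import Mathlib

section
/- (Lemma 2.1: asymptotic negligibility of marks of tempered configurations) If γ belongs to the tempered class M^t, then (1/l)·𝔪(γ_{B(0,l)}) tends to 0 as the natural number l tends to infinity. -/
open Metric

/-- (Lemma 2.1) If `γ` belongs to the tempered class `M^t`, then
`(1/l) · 𝔪(γ_{B(0,l)})` tends to `0` as `l → ∞`. -/
theorem tempered_mark_sup_isLittleO
    (d : ℕ) (hd : 1 ≤ d) (δ t : ℝ) (hδ : 0 < δ) (ht : 1 ≤ t)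
    {S : Type*} [NormedAddCommGroup S] [NormedSpace ℝ S]
    (γ : Set (EuclideanSpace ℝ (Fin d) × S))
    (htemp : ∀ l : ℕ, 1 ≤ l →
      ∀ F : Finset (EuclideanSpace ℝ (Fin d) × S),
        ↑F ⊆ γ ∩ (ball (0 : EuclideanSpace ℝ (Fin d)) (l : ℝ) ×ˢ Set.univ) →
        ∑ p ∈ F, (1 + ‖p.2‖ ^ ((d : ℝ) + δ)) ≤ t * (l : ℝ) ^ d) :
    Filter.Tendsto
      (fun l : ℕ =>
        (1 / (l : ℝ)) *
          sSup ((fun p : EuclideanSpace ℝ (Fin d) × S => ‖p.2‖) ''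
            (γ ∩ (ball (0 : EuclideanSpace ℝ (Fin d)) (l : ℝ) ×ˢ Set.univ))))
      Filter.atTop (nhds 0) := by
  set a : ℝ := 1 / ((d : ℝ) + δ) with ha_def
  have hdδ : (0 : ℝ) < (d : ℝ) + δ := by positivity
  have ha : 0 < a := by positivity
  have ht0 : (0 : ℝ) ≤ t := le_trans zero_le_one ht
  -- the dominating function
  have hg : Filter.Tendsto (fun l : ℕ => t ^ a * (l : ℝ) ^ ((d : ℝ) * a - 1))
      Filter.atTop (nhds 0) := by
    have hneg : (d : ℝ) * a - 1 < 0 := by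
      rw [ha_def, sub_neg, mul_one_div, div_lt_one hdδ]
      linarith
    have h1 : Filter.Tendsto (fun x : ℝ => x ^ ((d : ℝ) * a - 1))
        Filter.atTop (nhds 0) := by
      have := tendsto_rpow_neg_atTop (y := 1 - (d : ℝ) * a) (by linarith)
      simpa [neg_sub] using this
    have h2 : Filter.Tendsto (fun l : ℕ => ((l : ℝ)) ^ ((d : ℝ) * a - 1))
        Filter.atTop (nhds 0) := h1.comp tendsto_natCast_atTop_atTop
    simpa using h2.const_mul (t ^ a)
  refine squeeze_zero' ?_ ?_ hg
  · filter_upwards with l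
    have h1 : (0 : ℝ) ≤ 1 / (l : ℝ) := by positivity
    have h2 : (0 : ℝ) ≤ sSup ((fun p : EuclideanSpace ℝ (Fin d) × S => ‖p.2‖) ''
        (γ ∩ (ball (0 : EuclideanSpace ℝ (Fin d)) (l : ℝ) ×ˢ Set.univ))) := by
      apply Real.sSup_nonneg
      rintro x ⟨p, _, rfl⟩
      exact norm_nonneg _
    positivity
  · filter_upwards [Filter.eventually_ge_atTop 1] with l hl
    have hl0 : (0 : ℝ) < (l : ℝ) := by exact_mod_cast hl
    -- bound on each element
    have hbound : ∀ x ∈ ((fun p : EuclideanSpace ℝ (Fin d) × S => ‖p.2‖) ''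
        (γ ∩ (ball (0 : EuclideanSpace ℝ (Fin d)) (l : ℝ) ×ˢ Set.univ))),
        x ≤ (t * (l : ℝ) ^ d) ^ a := by
      rintro x ⟨p, hp, rfl⟩
      have hsum := htemp l hl {p} (by simpa using hp)
      simp only [Finset.sum_singleton] at hsum
      have hnorm : ‖p.2‖ ^ ((d : ℝ) + δ) ≤ t * (l : ℝ) ^ d := by linarith
      calc ‖p.2‖ = (‖p.2‖ ^ ((d : ℝ) + δ)) ^ a := by
            rw [← Real.rpow_mul (norm_nonneg _), ha_def, mul_one_div,
              div_self (ne_of_gt hdδ), Real.rpow_one]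
        _ ≤ (t * (l : ℝ) ^ d) ^ a :=
            Real.rpow_le_rpow (by positivity) hnorm (le_of_lt ha)
    have hM : (0 : ℝ) ≤ (t * (l : ℝ) ^ d) ^ a := by positivity
    have hsup : sSup ((fun p : EuclideanSpace ℝ (Fin d) × S => ‖p.2‖) ''
        (γ ∩ (ball (0 : EuclideanSpace ℝ (Fin d)) (l : ℝ) ×ˢ Set.univ)))
        ≤ (t * (l : ℝ) ^ d) ^ a := Real.sSup_le hbound hM
    have hstep : (1 / (l : ℝ)) * (t * (l : ℝ) ^ d) ^ a
        = t ^ a * (l : ℝ) ^ ((d : ℝ) * a - 1) := by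
      rw [Real.mul_rpow ht0 (by positivity), ← Real.rpow_natCast (l : ℝ) d,
        ← Real.rpow_mul (le_of_lt hl0), Real.rpow_sub hl0, Real.rpow_one]
      field_simp
    calc (1 / (l : ℝ)) * sSup ((fun p : EuclideanSpace ℝ (Fin d) × S => ‖p.2‖) ''
          (γ ∩ (ball (0 : EuclideanSpace ℝ (Fin d)) (l : ℝ) ×ˢ Set.univ)))
        ≤ (1 / (l : ℝ)) * (t * (l : ℝ) ^ d) ^ a :=
          mul_le_mul_of_nonneg_left hsup (by positivity)
      _ = t ^ a * (l : ℝ) ^ ((d : ℝ) * a - 1) := hstep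
end

section
/- (Lemma 2.2: far points of a tempered configuration do not reach a fixed ball) Let γ belong to the tempered class M^t with t ≥ 1, and set 𝔩(t) := (1/2)·(t·2^{d+δ})^{1/δ}. Then for every real l ≥ 𝔩(t) and every (x,m) ∈ γ with |x| ≥ 2l+1, one has |x| − ‖m‖ ≥ l; in particular the open Euclidean balls B(x,‖m‖) and B(0,l) in ℝ^d are disjoint. -/
open Metric

/-- (Lemma 2.2) Far points of a tempered configuration do not reach a fixed ball:
if `γ ∈ M^t`, `𝔩(t) = (1/2)·(t·2^{d+δ})^{1/δ}`, `l ≥ 𝔩(t)` and `(x,m) ∈ γ` with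
`|x| ≥ 2l+1`, then `|x| − ‖m‖ ≥ l`, so `B(x,‖m‖) ∩ B(0,l) = ∅`. -/
theorem tempered_far_points_do_not_reach
    (d : ℕ) (hd : 1 ≤ d) (δ t : ℝ) (hδ : 0 < δ) (ht : 1 ≤ t)
    {S : Type*} [NormedAddCommGroup S] [NormedSpace ℝ S]
    (γ : Set (EuclideanSpace ℝ (Fin d) × S))
    (htemp : ∀ l : ℕ, 1 ≤ l →
      ∀ F : Finset (EuclideanSpace ℝ (Fin d) × S),
        ↑F ⊆ γ ∩ (ball (0 : EuclideanSpace ℝ (Fin d)) (l : ℝ) ×ˢ Set.univ) →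
        ∑ p ∈ F, (1 + ‖p.2‖ ^ ((d : ℝ) + δ)) ≤ t * (l : ℝ) ^ d)
    (l : ℝ) (hl : (1 / 2) * (t * 2 ^ ((d : ℝ) + δ)) ^ (1 / δ) ≤ l)
    (x : EuclideanSpace ℝ (Fin d)) (m : S) (hxm : (x, m) ∈ γ)
    (hfar : 2 * l + 1 ≤ ‖x‖) :
    l ≤ ‖x‖ - ‖m‖ ∧
    Disjoint (ball x ‖m‖) (ball (0 : EuclideanSpace ℝ (Fin d)) l) := by
  have hlpos : 0 < l := lt_of_lt_of_le (by positivity) hl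
  have hx1 : (1 : ℝ) ≤ ‖x‖ := by nlinarith
  set a : ℝ := (‖x‖ + 1) / 2 with ha
  have hla : l + 1 ≤ a := by simp only [ha]; linarith
  have ha0 : (0 : ℝ) < a := by linarith
  -- apply temperedness to the singleton {(x,m)} with radius ⌊‖x‖⌋₊ + 1
  set n : ℕ := ⌊‖x‖⌋₊ + 1 with hn
  have hxn : ‖x‖ < (n : ℝ) := by
    simpa [hn] using Nat.lt_floor_add_one ‖x‖
  have hsum := htemp n (Nat.le_add_left 1 _) {(x, m)} (by
    intro p hp
    simp only [Finset.coe_singleton, Set.mem_singleton_iff] at hp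
    subst hp
    refine ⟨hxm, ?_, Set.mem_univ _⟩
    simpa [mem_ball, dist_zero_right] using hxn)
  simp only [Finset.sum_singleton] at hsum
  have hnle : (n : ℝ) ≤ ‖x‖ + 1 := by
    have := Nat.floor_le (norm_nonneg x)
    push_cast [hn]; linarith
  have hstep : t * (n : ℝ) ^ d ≤ t * (‖x‖ + 1) ^ d := by
    have : (n : ℝ) ^ d ≤ (‖x‖ + 1) ^ d :=
      pow_le_pow_left₀ (by positivity) hnle d
    nlinarith
  -- key bound: t * 2^d ≤ a^δ
  have hkey : t * (2 : ℝ) ^ (d : ℝ) ≤ a ^ δ := by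
    have h2a : (t * 2 ^ ((d : ℝ) + δ)) ^ (1 / δ) ≤ 2 * a := by
      nlinarith
    have h2a0 : (0 : ℝ) ≤ 2 * a := by linarith
    have := Real.rpow_le_rpow (by positivity) h2a hδ.le
    rw [one_div, Real.rpow_inv_rpow (by positivity) hδ.ne'] at this
    rw [Real.mul_rpow (by norm_num) ha0.le] at this
    rw [Real.rpow_add (by norm_num : (0:ℝ) < 2)] at this
    have h2δ : (0 : ℝ) < (2 : ℝ) ^ δ := Real.rpow_pos_of_pos (by norm_num) δ
    calc t * (2:ℝ) ^ (d:ℝ) = t * (2:ℝ) ^ (d:ℝ) * (2:ℝ) ^ δ / (2:ℝ) ^ δ := by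
          field_simp
      _ ≤ 2 ^ δ * a ^ δ / (2:ℝ) ^ δ := by
          apply div_le_div_of_nonneg_right ?_ h2δ.le
          nlinarith
      _ = a ^ δ := by field_simp
  -- conclude ‖m‖ ≤ a
  have hma : ‖m‖ ≤ a := by
    have h1 : ‖m‖ ^ ((d : ℝ) + δ) ≤ t * (‖x‖ + 1) ^ d := by linarith
    have h2 : t * (‖x‖ + 1) ^ d ≤ a ^ ((d : ℝ) + δ) := by
      have hxa : (‖x‖ + 1) ^ d = 2 ^ d * a ^ d := by
        rw [← mul_pow]; congr 1; simp only [ha]; ring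
      rw [hxa, Real.rpow_add ha0, ← Real.rpow_natCast a d,
        ← Real.rpow_natCast (2:ℝ) d] at *
      calc t * ((2:ℝ) ^ (d:ℝ) * a ^ (d:ℝ)) = t * (2:ℝ) ^ (d:ℝ) * a ^ (d:ℝ) := by ring
        _ ≤ a ^ δ * a ^ (d:ℝ) := by
            have : (0:ℝ) ≤ a ^ (d:ℝ) := (Real.rpow_pos_of_pos ha0 _).le
            nlinarith
        _ = a ^ (d:ℝ) * a ^ δ := by ring
    have := h1.trans h2
    exact (Real.rpow_le_rpow_iff (norm_nonneg m) ha0.le (by positivity)).mp this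
  have hmain : l ≤ ‖x‖ - ‖m‖ := by
    have : a ≤ ‖x‖ - l := by simp only [ha]; linarith
    linarith
  refine ⟨hmain, ball_disjoint_ball ?_⟩
  rw [dist_zero_right]
  linarith
end

section
/- (Lemma 2.3: the partition function is well defined) Under the above assumptions, the partition function Z_Λ := e^{−z|Λ|} · ( 1 + Σ_{k=1}^∞ (z^k/k!) · ∫_{(Λ×S)^k} exp( −h_k((x₁,m₁),…,(x_k,m_k)) ) dx₁ R(dm₁) ⋯ dx_k R(dm_k) ) is finite and positive: 0 < Z_Λ < ∞. -/
open MeasureTheory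
open scoped ENNReal

lemma aux_lintegral_pi_pow {α : Type*} [MeasurableSpace α] (μ : Measure α) [SigmaFinite μ]
    (g : α → ℝ≥0∞) (hg : Measurable g) (n : ℕ) :
    ∫⁻ x : Fin n → α, ∏ i, g (x i) ∂(Measure.pi fun _ => μ)
      = (∫⁻ x, g x ∂μ) ^ n := by
  induction n with
  | zero => simp
  | succ n ih =>
    have hmp := (measurePreserving_piFinSuccAbove (fun _ : Fin (n + 1) => μ) 0).symm
    rw [← hmp.lintegral_comp_emb (MeasurableEquiv.measurableEmbedding _)]
    simp only [MeasurableEquiv.piFinSuccAbove_symm_apply, Fin.insertNthEquiv, Equiv.coe_fn_mk,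
      Fin.prod_univ_succ, Fin.insertNth_zero, Fin.zero_succAbove, Fin.cons_zero, Fin.cons_succ,
      Function.comp_def, cast_eq]
    have hmeas : Measurable fun x : Fin n → α => ∏ i, g (x i) :=
      Finset.measurable_prod _ fun i _ => hg.comp (measurable_pi_apply i)
    rw [lintegral_prod_mul hg.aemeasurable hmeas.aemeasurable, ih, pow_succ']

set_option maxHeartbeats 1000000 in
/-- (Lemma 2.3) The partition function
`Z_Λ = e^{−z|Λ|}·(1 + Σ_{k≥1} (z^k/k!) ∫_{(Λ×S)^k} e^{−h_k} )` is finite and positive,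
under the super-exponential moment assumption `(H_m)` on the mark law `R` and the
stability (with constant `c`) of the energies `h_k`. -/
theorem partition_function_well_defined
    (d : ℕ) (hd : 1 ≤ d) (δ z c : ℝ) (hδ : 0 < δ) (hz : 0 < z) (hc : 0 ≤ c)
    {S : Type*} [NormedAddCommGroup S] [NormedSpace ℝ S]
    [MeasurableSpace S] [BorelSpace S]
    (R : Measure S) [IsProbabilityMeasure R]
    (hR : ∫⁻ m, ENNReal.ofReal (Real.exp (‖m‖ ^ ((d : ℝ) + 2 * δ))) ∂ R < ⊤)
    (Λ : Set (EuclideanSpace ℝ (Fin d)))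
    (hΛb : Bornology.IsBounded Λ) (hΛm : MeasurableSet Λ)
    (h : (k : ℕ) → (Fin k → EuclideanSpace ℝ (Fin d) × S) → ℝ)
    (hmeas : ∀ k, Measurable (h k))
    (hstab : ∀ (k : ℕ) (p : Fin k → EuclideanSpace ℝ (Fin d) × S),
      -(c * ∑ i, (1 + ‖(p i).2‖ ^ ((d : ℝ) + δ))) ≤ h k p) :
    0 < ENNReal.ofReal (Real.exp (-z * (volume Λ).toReal)) *
        (1 + ∑' k : ℕ,
          ENNReal.ofReal (z ^ (k + 1) / (Nat.factorial (k + 1) : ℝ)) *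
            ∫⁻ p : Fin (k + 1) → EuclideanSpace ℝ (Fin d) × S,
              ENNReal.ofReal (Real.exp (-(h (k + 1) p)))
              ∂(Measure.pi fun _ => (volume.restrict Λ).prod R)) ∧
    ENNReal.ofReal (Real.exp (-z * (volume Λ).toReal)) *
        (1 + ∑' k : ℕ,
          ENNReal.ofReal (z ^ (k + 1) / (Nat.factorial (k + 1) : ℝ)) *
            ∫⁻ p : Fin (k + 1) → EuclideanSpace ℝ (Fin d) × S,
              ENNReal.ofReal (Real.exp (-(h (k + 1) p)))
              ∂(Measure.pi fun _ => (volume.restrict Λ).prod R)) < ⊤ := by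
  set a : ℝ := (d : ℝ) + δ with ha
  set b : ℝ := (d : ℝ) + 2 * δ with hb
  set t0 : ℝ := max 1 (c ^ (1 / δ)) with ht0
  have ht0pos : 0 < t0 := lt_of_lt_of_le one_pos (le_max_left _ _)
  -- the single-mark weight
  set g : S → ℝ≥0∞ := fun m => ENNReal.ofReal (Real.exp (c * (1 + ‖m‖ ^ a))) with hg
  have hgmeas : Measurable g := by
    apply ENNReal.measurable_ofReal.comp
    apply Real.measurable_exp.comp
    apply (measurable_const.mul _)
    exact (measurable_const.add ((measurable_norm).pow_const a |>.mono le_rfl le_rfl))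
  -- key real inequality : c * (1 + t^a) ≤ c * (1 + t0^a) + t^b for t ≥ 0
  have hkey : ∀ t : ℝ, 0 ≤ t → c * (1 + t ^ a) ≤ c * (1 + t0 ^ a) + t ^ b := by
    intro t ht
    have hattained : c * t ^ a ≤ c * t0 ^ a + t ^ b := by
      rcases le_total t t0 with htle | htge
      · have h1 : c * t ^ a ≤ c * t0 ^ a :=
          mul_le_mul_of_nonneg_left (Real.rpow_le_rpow ht htle (by positivity)) hc
        have h2 : (0 : ℝ) ≤ t ^ b := Real.rpow_nonneg ht b
        linarith
      · have htpos : 0 < t := lt_of_lt_of_le ht0pos htge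
        have hc1 : c ≤ t0 ^ δ := by
          have : (c ^ (1 / δ)) ^ δ ≤ t0 ^ δ :=
            Real.rpow_le_rpow (Real.rpow_nonneg hc _) (le_max_right _ _) hδ.le
          rwa [← Real.rpow_mul hc, one_div_mul_cancel hδ.ne', Real.rpow_one] at this
        have hc2 : c ≤ t ^ δ :=
          hc1.trans (Real.rpow_le_rpow ht0pos.le htge hδ.le)
        have h3 : c * t ^ a ≤ t ^ δ * t ^ a :=
          mul_le_mul_of_nonneg_right hc2 (Real.rpow_nonneg ht a)
        have h4 : t ^ δ * t ^ a = t ^ b := by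
          rw [← Real.rpow_add htpos]
          congr 1
          rw [ha, hb]; ring
        have h5 : (0 : ℝ) ≤ c * t0 ^ a := by positivity
        linarith [h3, h4 ▸ h3]
    have := hattained
    nlinarith [Real.rpow_nonneg ht b]
  -- the moment integral is finite
  have hgint : ∫⁻ m, g m ∂ R < ⊤ := by
    have hbound : ∀ m : S, g m ≤
        ENNReal.ofReal (Real.exp (c * (1 + t0 ^ a))) *
          ENNReal.ofReal (Real.exp (‖m‖ ^ b)) := by
      intro m
      rw [hg, ← ENNReal.ofReal_mul (Real.exp_nonneg _), ← Real.exp_add]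
      exact ENNReal.ofReal_le_ofReal (Real.exp_le_exp.mpr (hkey ‖m‖ (norm_nonneg m)))
    calc ∫⁻ m, g m ∂ R
        ≤ ∫⁻ m, ENNReal.ofReal (Real.exp (c * (1 + t0 ^ a))) *
            ENNReal.ofReal (Real.exp (‖m‖ ^ b)) ∂ R := lintegral_mono hbound
      _ = ENNReal.ofReal (Real.exp (c * (1 + t0 ^ a))) *
            ∫⁻ m, ENNReal.ofReal (Real.exp (‖m‖ ^ b)) ∂ R :=
          lintegral_const_mul' _ _ ENNReal.ofReal_ne_top
      _ < ⊤ := ENNReal.mul_lt_top ENNReal.ofReal_lt_top hR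
  -- the one-particle integral
  set A : ℝ≥0∞ := volume Λ * ∫⁻ m, g m ∂ R with hA
  have hAlt : A < ⊤ := ENNReal.mul_lt_top hΛb.measure_lt_top hgint
  have hGint : ∫⁻ q : EuclideanSpace ℝ (Fin d) × S, g q.2 ∂((volume.restrict Λ).prod R) = A := by
    have h0 := lintegral_prod_mul (μ := volume.restrict Λ) (ν := R)
      (aemeasurable_const (b := (1 : ℝ≥0∞))) hgmeas.aemeasurable
    simpa [lintegral_one, Measure.restrict_apply_univ, hA] using h0
  -- bound each k-particle integral
  have hint_bound : ∀ k : ℕ,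
      (∫⁻ p : Fin (k + 1) → EuclideanSpace ℝ (Fin d) × S,
        ENNReal.ofReal (Real.exp (-(h (k + 1) p)))
        ∂(Measure.pi fun _ => (volume.restrict Λ).prod R)) ≤ A ^ (k + 1) := by
    intro k
    have hpt : ∀ p : Fin (k + 1) → EuclideanSpace ℝ (Fin d) × S,
        ENNReal.ofReal (Real.exp (-(h (k + 1) p))) ≤ ∏ i, g ((p i).2) := by
      intro p
      have h1 : -(h (k + 1) p) ≤ c * ∑ i, (1 + ‖(p i).2‖ ^ a) := by
        have := hstab (k + 1) p
        linarith
      have h2 : Real.exp (-(h (k + 1) p)) ≤ Real.exp (c * ∑ i, (1 + ‖(p i).2‖ ^ a)) :=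
        Real.exp_le_exp.mpr h1
      calc ENNReal.ofReal (Real.exp (-(h (k + 1) p)))
          ≤ ENNReal.ofReal (Real.exp (c * ∑ i, (1 + ‖(p i).2‖ ^ a))) :=
            ENNReal.ofReal_le_ofReal h2
        _ = ∏ i, g ((p i).2) := by
            rw [Finset.mul_sum, Real.exp_sum, ENNReal.ofReal_prod_of_nonneg
              (fun i _ => Real.exp_nonneg _)]
    calc (∫⁻ p : Fin (k + 1) → EuclideanSpace ℝ (Fin d) × S,
          ENNReal.ofReal (Real.exp (-(h (k + 1) p)))
          ∂(Measure.pi fun _ => (volume.restrict Λ).prod R))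
        ≤ ∫⁻ p : Fin (k + 1) → EuclideanSpace ℝ (Fin d) × S,
            ∏ i, g ((p i).2) ∂(Measure.pi fun _ => (volume.restrict Λ).prod R) :=
          lintegral_mono hpt
      _ = (∫⁻ q : EuclideanSpace ℝ (Fin d) × S, g q.2 ∂((volume.restrict Λ).prod R)) ^ (k + 1) :=
          aux_lintegral_pi_pow ((volume.restrict Λ).prod R) (fun q => g q.2) (by exact hgmeas.comp measurable_snd) (k + 1)
      _ = A ^ (k + 1) := by rw [hGint]
  -- the series is finite
  set A' : ℝ := A.toReal with hA'
  have hA'nn : 0 ≤ A' := ENNReal.toReal_nonneg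
  have hAeq : A = ENNReal.ofReal A' := (ENNReal.ofReal_toReal hAlt.ne).symm
  have hsum : (∑' k : ℕ,
      ENNReal.ofReal (z ^ (k + 1) / (Nat.factorial (k + 1) : ℝ)) *
        ∫⁻ p : Fin (k + 1) → EuclideanSpace ℝ (Fin d) × S,
          ENNReal.ofReal (Real.exp (-(h (k + 1) p)))
          ∂(Measure.pi fun _ => (volume.restrict Λ).prod R)) < ⊤ := by
    have hterm : ∀ k : ℕ,
        ENNReal.ofReal (z ^ (k + 1) / (Nat.factorial (k + 1) : ℝ)) *
          (∫⁻ p : Fin (k + 1) → EuclideanSpace ℝ (Fin d) × S,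
            ENNReal.ofReal (Real.exp (-(h (k + 1) p)))
            ∂(Measure.pi fun _ => (volume.restrict Λ).prod R)) ≤
          ENNReal.ofReal ((z * A') ^ (k + 1) / (Nat.factorial (k + 1) : ℝ)) := by
      intro k
      calc ENNReal.ofReal (z ^ (k + 1) / (Nat.factorial (k + 1) : ℝ)) *
            (∫⁻ p : Fin (k + 1) → EuclideanSpace ℝ (Fin d) × S,
              ENNReal.ofReal (Real.exp (-(h (k + 1) p)))
              ∂(Measure.pi fun _ => (volume.restrict Λ).prod R))
          ≤ ENNReal.ofReal (z ^ (k + 1) / (Nat.factorial (k + 1) : ℝ)) * A ^ (k + 1) :=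
            mul_le_mul_right (hint_bound k) _
        _ = ENNReal.ofReal ((z * A') ^ (k + 1) / (Nat.factorial (k + 1) : ℝ)) := by
            rw [hAeq, ← ENNReal.ofReal_pow hA'nn, ← ENNReal.ofReal_mul (by positivity)]
            congr 1
            rw [mul_pow]
            ring
    calc (∑' k : ℕ,
        ENNReal.ofReal (z ^ (k + 1) / (Nat.factorial (k + 1) : ℝ)) *
          ∫⁻ p : Fin (k + 1) → EuclideanSpace ℝ (Fin d) × S,
            ENNReal.ofReal (Real.exp (-(h (k + 1) p)))
            ∂(Measure.pi fun _ => (volume.restrict Λ).prod R))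
        ≤ ∑' k : ℕ, ENNReal.ofReal ((z * A') ^ (k + 1) / (Nat.factorial (k + 1) : ℝ)) :=
          ENNReal.tsum_le_tsum hterm
      _ < ⊤ := by
          have hsummable : Summable (fun k : ℕ => (z * A') ^ (k + 1) / (Nat.factorial (k + 1) : ℝ)) := by
            have := (Real.summable_pow_div_factorial (z * A')).comp_injective
              (add_left_injective 1)
            exact this
          rw [← ENNReal.ofReal_tsum_of_nonneg (fun k => by positivity) hsummable]
          exact ENNReal.ofReal_lt_top
  constructor
  · refine ENNReal.mul_pos ?_ ?_
    · exact (ENNReal.ofReal_pos.mpr (Real.exp_pos _)).ne'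
    · exact (lt_of_lt_of_le one_pos le_self_add).ne'
  · refine ENNReal.mul_lt_top ENNReal.ofReal_lt_top ?_
    exact ENNReal.add_lt_top.mpr ⟨ENNReal.one_lt_top, hsum⟩
end

section
/- (Stability of the marked pair potential of the diffusion model, Section 4) For every N ≥ 1 and every family of marked points 𝘅 : Fin N → ℝ² × C([0,1],ℝ²), writing 𝘅_i = (x_i, m_i), one has Σ_{i<j} Φ(𝘅_i, 𝘅_j) ≥ −c_φ · N. -/
open scoped NNReal

/-- The two-body potential `Φ` of the diffusion model of Section 4: locations in `ℝ²`,
marks in `C([0,1],ℝ²)` with the supremum norm. -/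
noncomputable def diffusionPairPotential (a₀ : ℝ) (φ φt : ℝ → ℝ)
    (p q : EuclideanSpace ℝ (Fin 2) × C(Set.Icc (0 : ℝ) 1, EuclideanSpace ℝ (Fin 2))) :
    ℝ :=
  if dist p.1 q.1 ≤ a₀ + ‖p.2‖ + ‖q.2‖ then
    φ (dist p.1 q.1) + ∫ s : Set.Icc (0 : ℝ) 1, φt ‖p.2 s - q.2 s‖
  else 0

/-- Stability of the marked pair potential of the diffusion model:
`Σ_{i<j} Φ(𝘅_i,𝘅_j) ≥ −c_φ·N`. -/
theorem diffusionPairPotential_stable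
    (a₀ cφ : ℝ) (ha₀ : 0 < a₀) (hcφ : 0 ≤ cφ)
    (φ φt : ℝ → ℝ) (hφt_cont : Continuous φt) (hφt_nonneg : ∀ u, 0 ≤ φt u)
    (hφ_stable : ∀ N : ℕ, 1 ≤ N → ∀ x : Fin N → EuclideanSpace ℝ (Fin 2),
      -(cφ * N) ≤ ∑ p ∈ Finset.univ.filter (fun p : Fin N × Fin N => p.1 < p.2),
        φ (dist (x p.1) (x p.2)))
    (hφ_neg : ∀ u : ℝ, a₀ ≤ u → φ u ≤ 0)
    (N : ℕ) (hN : 1 ≤ N)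
    (X : Fin N → EuclideanSpace ℝ (Fin 2) × C(Set.Icc (0 : ℝ) 1, EuclideanSpace ℝ (Fin 2))) :
    -(cφ * N) ≤ ∑ p ∈ Finset.univ.filter (fun p : Fin N × Fin N => p.1 < p.2),
      diffusionPairPotential a₀ φ φt (X p.1) (X p.2) := by
  refine le_trans (hφ_stable N hN (fun i => (X i).1)) (Finset.sum_le_sum ?_)
  intro p _
  unfold diffusionPairPotential
  split_ifs with h
  · have : 0 ≤ ∫ s : Set.Icc (0 : ℝ) 1, φt ‖(X p.1).2 s - (X p.2).2 s‖ :=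
      MeasureTheory.integral_nonneg fun s => hφt_nonneg _
    linarith
  · push_neg at h
    refine hφ_neg _ ?_
    have h1 : (0:ℝ) ≤ ‖(X p.1).2‖ := norm_nonneg _
    have h2 : (0:ℝ) ≤ ‖(X p.2).2‖ := norm_nonneg _
    linarith
end

section
/- (The energy of the diffusion model satisfies the stability assumption (H_st)) For every N ≥ 1 and every family of marked points 𝘅 : Fin N → ℝ² × C([0,1],ℝ²), writing 𝘅_i = (x_i, m_i), the energy H := Σ_{i=1}^N Ψ(𝘅_i) + Σ_{i<j} Φ(𝘅_i, 𝘅_j) satisfies H ≥ −(c₁ + c_φ) · Σ_{i=1}^N (1 + ‖m_i‖^{2+δ}). -/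
/-- The energy `H = Σ_i Ψ(𝘅_i) + Σ_{i<j} Φ(𝘅_i,𝘅_j)` of the diffusion model satisfies
the stability assumption `(H_st)`:
`H ≥ −(c₁+c_φ)·Σ_i (1+‖m_i‖^{2+δ})`. -/
theorem diffusion_energy_stable
    (a₀ cφ δ c₁ : ℝ) (ha₀ : 0 < a₀) (hcφ : 0 ≤ cφ) (hδ : 0 < δ) (hc₁ : 0 ≤ c₁)
    (φ φt : ℝ → ℝ) (hφt_cont : Continuous φt) (hφt_nonneg : ∀ u, 0 ≤ φt u)
    (hφ_stable : ∀ N : ℕ, 1 ≤ N → ∀ x : Fin N → EuclideanSpace ℝ (Fin 2),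
      -(cφ * N) ≤ ∑ p ∈ Finset.univ.filter (fun p : Fin N × Fin N => p.1 < p.2),
        φ (dist (x p.1) (x p.2)))
    (hφ_neg : ∀ u : ℝ, a₀ ≤ u → φ u ≤ 0)
    (Ψ : EuclideanSpace ℝ (Fin 2) × C(Set.Icc (0 : ℝ) 1, EuclideanSpace ℝ (Fin 2)) → ℝ)
    (hΨ : ∀ p, -(c₁ * (1 + ‖p.2‖ ^ ((2 : ℝ) + δ))) ≤ Ψ p)
    (N : ℕ) (hN : 1 ≤ N)
    (X : Fin N → EuclideanSpace ℝ (Fin 2) × C(Set.Icc (0 : ℝ) 1, EuclideanSpace ℝ (Fin 2))) :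
    -((c₁ + cφ) * ∑ i, (1 + ‖(X i).2‖ ^ ((2 : ℝ) + δ))) ≤
      (∑ i, Ψ (X i)) +
        ∑ p ∈ Finset.univ.filter (fun p : Fin N × Fin N => p.1 < p.2),
          diffusionPairPotential a₀ φ φt (X p.1) (X p.2) := by
  have hΦ : ∀ p : Fin N × Fin N,
      φ (dist (X p.1).1 (X p.2).1) ≤ diffusionPairPotential a₀ φ φt (X p.1) (X p.2) := by
    intro p
    unfold diffusionPairPotential
    split_ifs with h
    · have : 0 ≤ ∫ s : Set.Icc (0 : ℝ) 1, φt ‖(X p.1).2 s - (X p.2).2 s‖ :=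
        MeasureTheory.integral_nonneg fun s => hφt_nonneg _
      linarith
    · push_neg at h
      have h1 : a₀ ≤ dist (X p.1).1 (X p.2).1 := by
        have := norm_nonneg (X p.1).2
        have := norm_nonneg (X p.2).2
        linarith
      exact hφ_neg _ h1
  have hΦsum : -(cφ * N) ≤
      ∑ p ∈ Finset.univ.filter (fun p : Fin N × Fin N => p.1 < p.2),
        diffusionPairPotential a₀ φ φt (X p.1) (X p.2) :=
    le_trans (hφ_stable N hN (fun i => (X i).1))
      (Finset.sum_le_sum fun p _ => hΦ p)
  have hΨsum : -(c₁ * ∑ i, (1 + ‖(X i).2‖ ^ ((2 : ℝ) + δ))) ≤ ∑ i, Ψ (X i) := by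
    rw [Finset.mul_sum, ← Finset.sum_neg_distrib]
    exact Finset.sum_le_sum fun i _ => hΨ (X i)
  have hcount : (N : ℝ) ≤ ∑ i, (1 + ‖(X i).2‖ ^ ((2 : ℝ) + δ)) := by
    calc (N : ℝ) = ∑ _i : Fin N, (1 : ℝ) := by simp
    _ ≤ _ := Finset.sum_le_sum fun i _ => by
        have := Real.rpow_nonneg (norm_nonneg (X i).2) ((2 : ℝ) + δ)
        linarith
  have := mul_le_mul_of_nonneg_left hcount hcφ
  nlinarith [hΦsum, hΨsum]
end

section
/- (Locally uniform stability (H_loc.st) for the diffusion model) For all N, M ≥ 1 and all families γ : Fin N → ℝ² × C([0,1],ℝ²) and ξ : Fin M → ℝ² × C([0,1],ℝ²) of marked points, writing γ_i = (x_i, m_i), one has Σ_{i=1}^N Ψ(γ_i) + Σ_{i<j} Φ(γ_i, γ_j) + Σ_{i=1}^N Σ_{j=1}^M Φ(γ_i, ξ_j) ≥ −(c₁ + c_φ + c₂·M) · Σ_{i=1}^N (1 + ‖m_i‖^{2+δ}). -/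
/-- Locally uniform stability `(H_loc.st)` for the diffusion model:
`Σ_i Ψ(γ_i) + Σ_{i<j} Φ(γ_i,γ_j) + Σ_i Σ_j Φ(γ_i,ξ_j)
  ≥ −(c₁+c_φ+c₂·M)·Σ_i (1+‖m_i‖^{2+δ})`. -/
theorem diffusion_energy_locally_uniformly_stable
    (a₀ cφ c₂ δ c₁ : ℝ) (ha₀ : 0 < a₀) (hcφ : 0 ≤ cφ) (hc₂ : 0 ≤ c₂)
    (hδ : 0 < δ) (hc₁ : 0 ≤ c₁)
    (φ φt : ℝ → ℝ) (hφt_cont : Continuous φt) (hφt_nonneg : ∀ u, 0 ≤ φt u)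
    (hφ_stable : ∀ N : ℕ, 1 ≤ N → ∀ x : Fin N → EuclideanSpace ℝ (Fin 2),
      -(cφ * N) ≤ ∑ p ∈ Finset.univ.filter (fun p : Fin N × Fin N => p.1 < p.2),
        φ (dist (x p.1) (x p.2)))
    (hφ_neg : ∀ u : ℝ, a₀ ≤ u → φ u ≤ 0)
    (hφ_bdd : ∀ u : ℝ, -c₂ ≤ φ u)
    (Ψ : EuclideanSpace ℝ (Fin 2) × C(Set.Icc (0 : ℝ) 1, EuclideanSpace ℝ (Fin 2)) → ℝ)
    (hΨ : ∀ p, -(c₁ * (1 + ‖p.2‖ ^ ((2 : ℝ) + δ))) ≤ Ψ p)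
    (N M : ℕ) (hN : 1 ≤ N) (hM : 1 ≤ M)
    (γ : Fin N → EuclideanSpace ℝ (Fin 2) × C(Set.Icc (0 : ℝ) 1, EuclideanSpace ℝ (Fin 2)))
    (ξ : Fin M → EuclideanSpace ℝ (Fin 2) × C(Set.Icc (0 : ℝ) 1, EuclideanSpace ℝ (Fin 2))) :
    -((c₁ + cφ + c₂ * M) * ∑ i, (1 + ‖(γ i).2‖ ^ ((2 : ℝ) + δ))) ≤
      (∑ i, Ψ (γ i)) +
        (∑ p ∈ Finset.univ.filter (fun p : Fin N × Fin N => p.1 < p.2),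
          diffusionPairPotential a₀ φ φt (γ p.1) (γ p.2)) +
        ∑ i : Fin N, ∑ j : Fin M, diffusionPairPotential a₀ φ φt (γ i) (ξ j) := by
  classical
  set S := ∑ i, (1 + ‖(γ i).2‖ ^ ((2 : ℝ) + δ)) with hSdef
  have hterm : ∀ i : Fin N, (1 : ℝ) ≤ 1 + ‖(γ i).2‖ ^ ((2 : ℝ) + δ) := by
    intro i
    have := Real.rpow_nonneg (norm_nonneg (γ i).2) ((2 : ℝ) + δ)
    linarith
  have hNS : (N : ℝ) ≤ S := by
    calc (N : ℝ) = ∑ _i : Fin N, (1 : ℝ) := by simp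
    _ ≤ S := Finset.sum_le_sum fun i _ => hterm i
  -- lemma A : φ(dist) ≤ Φ
  have hA : ∀ p q, φ (dist p.1 q.1) ≤ diffusionPairPotential a₀ φ φt p q := by
    intro p q
    unfold diffusionPairPotential
    split_ifs with h
    · have hint : 0 ≤ ∫ s : Set.Icc (0 : ℝ) 1, φt ‖p.2 s - q.2 s‖ :=
        MeasureTheory.integral_nonneg fun s => hφt_nonneg _
      linarith
    · push_neg at h
      have h1 := norm_nonneg p.2
      have h2 := norm_nonneg q.2
      have : a₀ ≤ dist p.1 q.1 := by linarith
      linarith [hφ_neg _ this]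
  -- lemma B : -c₂ ≤ Φ
  have hB : ∀ p q, -c₂ ≤ diffusionPairPotential a₀ φ φt p q := by
    intro p q
    unfold diffusionPairPotential
    split_ifs with h
    · have hint : 0 ≤ ∫ s : Set.Icc (0 : ℝ) 1, φt ‖p.2 s - q.2 s‖ :=
        MeasureTheory.integral_nonneg fun s => hφt_nonneg _
      linarith [hφ_bdd (dist p.1 q.1)]
    · linarith
  -- bound 1 : self potentials
  have h1 : -(c₁ * S) ≤ ∑ i, Ψ (γ i) := by
    have := Finset.sum_le_sum (fun i (_ : i ∈ Finset.univ) => hΨ (γ i))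
    calc -(c₁ * S) = ∑ i, -(c₁ * (1 + ‖(γ i).2‖ ^ ((2 : ℝ) + δ))) := by
          rw [hSdef, Finset.mul_sum]
          simp
    _ ≤ ∑ i, Ψ (γ i) := this
  -- bound 2 : pair interactions among γ
  have h2 : -(cφ * S) ≤ ∑ p ∈ Finset.univ.filter (fun p : Fin N × Fin N => p.1 < p.2),
      diffusionPairPotential a₀ φ φt (γ p.1) (γ p.2) := by
    have hs := hφ_stable N hN (fun i => (γ i).1)
    have hle : ∑ p ∈ Finset.univ.filter (fun p : Fin N × Fin N => p.1 < p.2),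
        φ (dist ((γ p.1).1) ((γ p.2).1)) ≤
        ∑ p ∈ Finset.univ.filter (fun p : Fin N × Fin N => p.1 < p.2),
        diffusionPairPotential a₀ φ φt (γ p.1) (γ p.2) :=
      Finset.sum_le_sum fun p _ => hA (γ p.1) (γ p.2)
    have hmono : -(cφ * S) ≤ -(cφ * N) :=
      neg_le_neg (mul_le_mul_of_nonneg_left hNS hcφ)
    linarith
  -- bound 3 : cross interactions
  have h3 : -(c₂ * M * S) ≤ ∑ i : Fin N, ∑ j : Fin M,
      diffusionPairPotential a₀ φ φt (γ i) (ξ j) := by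
    have hle : ∑ i : Fin N, ∑ j : Fin M, (-c₂ : ℝ) ≤ ∑ i : Fin N, ∑ j : Fin M,
        diffusionPairPotential a₀ φ φt (γ i) (ξ j) :=
      Finset.sum_le_sum fun i _ => Finset.sum_le_sum fun j _ => hB (γ i) (ξ j)
    have heq : ∑ _i : Fin N, ∑ _j : Fin M, (-c₂ : ℝ) = -(c₂ * M * N) := by
      simp [Finset.sum_const]
      ring
    have hmono : -(c₂ * M * S) ≤ -(c₂ * M * N) :=
      neg_le_neg (mul_le_mul_of_nonneg_left hNS (by positivity))
    linarith
  have : -((c₁ + cφ + c₂ * M) * S) = -(c₁ * S) + -(cφ * S) + -(c₂ * M * S) := by ring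
  linarith
end
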